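/- Let a > 0, let f, g : [-a,a] → ℝ be odd continuous functions, let M > 0, and let 0 ≤ ρ < min{M/2, 1/(4a(FM + G))}. If y : [-a,a] → ℝ is any differentiable solution of the Abel equation y'(t) = f(t)y(t)^3 + g(t)y(t)^2 with y(-a) = ρ and ‖y‖_∞ ≤ M, then y is even (y(−t) = y(t) for all t ∈ [-a,a]); in particular y is closed, i.e., y(a) = y(-a). Consequently the origin x = 0 is a center of the Abel equation: all solutions with sufficiently small nonnegative initial value at t = -a are closed. -/

import Mathlib

/-- If `f, g` are odd continuous on `[-a,a]`, `M > 0`, and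
`0 ≤ ρ < min{M/2, 1/(4a(FM+G))}` (with `F = max |f|`, `G = max |g|`), then every
differentiable solution `y` of the Abel equation `y' = f y³ + g y²` with `y(-a) = ρ`
and `‖y‖_∞ ≤ M` is even on `[-a,a]`, and in particular closed: `y a = y (-a)`.
This expresses that the origin is a center: all solutions with sufficiently small
nonnegative initial value at `t = -a` are closed. -/
theorem center_of_abel_equation
    (a ρ M F G : ℝ) (ha : 0 < a) (hM : 0 < M) (f g : ℝ → ℝ)
    (hf : ContinuousOn f (Set.Icc (-a) a)) (hg : ContinuousOn g (Set.Icc (-a) a))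
    (hfodd : ∀ t ∈ Set.Icc (-a) a, f (-t) = -f t)
    (hgodd : ∀ t ∈ Set.Icc (-a) a, g (-t) = -g t)
    (hF : IsGreatest ((fun t => |f t|) '' Set.Icc (-a) a) F)
    (hG : IsGreatest ((fun t => |g t|) '' Set.Icc (-a) a) G)
    (hρ0 : 0 ≤ ρ) (hρ : ρ < min (M / 2) (1 / (4 * a * (F * M + G))))
    (y : ℝ → ℝ)
    (hy : ∀ t ∈ Set.Icc (-a) a,
      HasDerivWithinAt y (f t * y t ^ 3 + g t * y t ^ 2) (Set.Icc (-a) a) t)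
    (hyρ : y (-a) = ρ)
    (hyM : ∀ t ∈ Set.Icc (-a) a, |y t| ≤ M) :
    (∀ t ∈ Set.Icc (-a) a, y (-t) = y t) ∧ y a = y (-a) := by
  -- F, G are nonnegative
  have hF0 : 0 ≤ F := by
    obtain ⟨t, -, ht⟩ := hF.1
    exact ht ▸ abs_nonneg _
  have hG0 : 0 ≤ G := by
    obtain ⟨t, -, ht⟩ := hG.1
    exact ht ▸ abs_nonneg _
  have hFt : ∀ t ∈ Set.Icc (-a) a, |f t| ≤ F := fun t ht => hF.2 ⟨t, ht, rfl⟩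
  have hGt : ∀ t ∈ Set.Icc (-a) a, |g t| ≤ G := fun t ht => hG.2 ⟨t, ht, rfl⟩
  -- Lipschitz constant
  have hK0 : (0:ℝ) ≤ 3 * F * M ^ 2 + 2 * G * M := by positivity
  set K : NNReal := ⟨3 * F * M ^ 2 + 2 * G * M, hK0⟩ with hKdef
  set v : ℝ → ℝ → ℝ := fun t x => f t * x ^ 3 + g t * x ^ 2 with hvdef
  set s : ℝ → Set ℝ := fun t =>
    if t ∈ Set.Icc (-a) a then Metric.closedBall (0:ℝ) M else ∅ with hsdef
  have hv : ∀ t, LipschitzOnWith K (v t) (s t) := by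
    intro t
    by_cases ht : t ∈ Set.Icc (-a) a
    · rw [hsdef]
      simp only [ht, if_true]
      rw [lipschitzOnWith_iff_dist_le_mul]
      intro x hx z hz
      rw [Metric.mem_closedBall, Real.dist_eq, sub_zero] at hx hz
      rw [Real.dist_eq, Real.dist_eq]
      have h1 : v t x - v t z = f t * ((x - z) * (x^2 + x*z + z^2)) + g t * ((x - z) * (x + z)) := by
        rw [hvdef]; ring
      have hxz2 : |x^2 + x*z + z^2| ≤ 3 * M^2 := by
        calc |x^2 + x*z + z^2| ≤ |x^2| + |x*z| + |z^2| := abs_add_three _ _ _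
          _ ≤ M^2 + M^2 + M^2 := by
              have h1 : |x^2| ≤ M^2 := by rw [abs_pow]; gcongr
              have h2 : |z^2| ≤ M^2 := by rw [abs_pow]; gcongr
              have h3 : |x*z| ≤ M^2 := by
                rw [abs_mul, sq]
                exact mul_le_mul hx hz (abs_nonneg z) hM.le
              linarith
          _ = 3 * M^2 := by ring
      have hxz1 : |x + z| ≤ 2 * M := by
        calc |x + z| ≤ |x| + |z| := abs_add_le _ _
          _ ≤ M + M := add_le_add hx hz
          _ = 2 * M := by ring
      calc |v t x - v t z|
          ≤ |f t| * (|x - z| * |x^2 + x*z + z^2|) + |g t| * (|x - z| * |x + z|) := by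
            rw [h1]
            refine (abs_add_le _ _).trans ?_
            rw [abs_mul, abs_mul, abs_mul, abs_mul]
        _ ≤ F * (|x - z| * (3 * M^2)) + G * (|x - z| * (2 * M)) := by
            gcongr
            · exact hFt t ht
            · exact hGt t ht
        _ = (3 * F * M^2 + 2 * G * M) * |x - z| := by ring
        _ = (K : ℝ) * |x - z| := rfl
    · rw [hsdef]
      simp only [ht, if_false]
      exact lipschitzOnWith_empty _ _
  -- y is continuous on the interval
  have hycont : ContinuousOn y (Set.Icc (-a) a) :=
    fun t ht => (hy t ht).continuousWithinAt
  -- map properties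
  have hneg : ∀ t ∈ Set.Icc (-a) a, -t ∈ Set.Icc (-a) a := by
    intro t ht
    constructor <;> [linarith [ht.2]; linarith [ht.1]]
  set z : ℝ → ℝ := fun t => y (-t) with hzdef
  have hzcont : ContinuousOn z (Set.Icc (-a) a) :=
    hycont.comp continuousOn_neg hneg
  have h0 : (0:ℝ) ∈ Set.Ioo (-a) a := ⟨neg_lt_zero.mpr ha, ha⟩
  -- derivatives at interior points
  have hyderiv : ∀ t ∈ Set.Ioo (-a) a, HasDerivAt y (v t (y t)) t := by
    intro t ht
    exact (hy t (Set.Ioo_subset_Icc_self ht)).hasDerivAt (Icc_mem_nhds ht.1 ht.2)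
  have hzderiv : ∀ t ∈ Set.Ioo (-a) a, HasDerivAt z (v t (z t)) t := by
    intro t ht
    have hnt : -t ∈ Set.Ioo (-a) a := by constructor <;> [linarith [ht.2]; linarith [ht.1]]
    have h1 : HasDerivAt y (v (-t) (y (-t))) (-t) := hyderiv _ hnt
    have h2 : HasDerivAt z (v (-t) (y (-t)) * (-1)) t := by
      simpa [hzdef, Function.comp_def] using h1.comp t (hasDerivAt_neg t)
    convert h2 using 1
    rw [hvdef]
    simp only
    rw [hfodd t (Set.Ioo_subset_Icc_self ht), hgodd t (Set.Ioo_subset_Icc_self ht), hzdef]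
    ring
  -- membership in s
  have hys : ∀ t ∈ Set.Ioo (-a) a, y t ∈ s t := by
    intro t ht
    rw [hsdef]
    simp only [Set.Ioo_subset_Icc_self ht, if_true]
    rw [Metric.mem_closedBall, Real.dist_eq, sub_zero]
    exact hyM t (Set.Ioo_subset_Icc_self ht)
  have hzs : ∀ t ∈ Set.Ioo (-a) a, z t ∈ s t := by
    intro t ht
    rw [hsdef]
    simp only [Set.Ioo_subset_Icc_self ht, if_true]
    rw [Metric.mem_closedBall, Real.dist_eq, sub_zero]
    exact hyM (-t) (hneg t (Set.Ioo_subset_Icc_self ht))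
  have heq0 : z 0 = y 0 := by rw [hzdef]; simp
  have heqon : Set.EqOn z y (Set.Icc (-a) a) :=
    ODE_solution_unique_of_mem_Icc (fun t _ => hv t) h0 hzcont hzderiv hzs hycont hyderiv hys heq0
  constructor
  · intro t ht
    exact heqon ht
  · have := heqon (Set.left_mem_Icc.mpr (by linarith))
    rw [hzdef] at this
    simp only [neg_neg] at this
    exact this
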